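/- Let q ≥ 2, p = q³ + q⁴, and let h ∈ S^{q−1} be a unit vector, θ ∈ ℝ, and u, w ∈ ℝ^q with ⟨h, u⟩ = ⟨h, w⟩ = 0. Define D(u) = ( cos θ (u⊗h⊗h + h⊗u⊗h + h⊗h⊗u), sin θ (u⊗h⊗h⊗h + h⊗u⊗h⊗h + h⊗h⊗u⊗h + h⊗h⊗h⊗u) ) ∈ ℝ^p and x_θ = (−sin θ · h^{⊗3}, cos θ · h^{⊗4}) ∈ ℝ^p. Then ⟨D(u), D(w)⟩ = (3 cos²θ + 4 sin²θ) ⟨u, w⟩, ⟨D(u), x_θ⟩ = 0, ⟨x_θ, x_θ⟩ = 1, ⟨x(h,θ), D(u)⟩ = 0, and ⟨x(h,θ), x_θ⟩ = 0. -/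

import Mathlib

open scoped RealInnerProductSpace BigOperators
open MeasureTheory ProbabilityTheory Real Filter

noncomputable section

/-- The threefold Kronecker power `h^{⊗3} ∈ ℝ^{q³}`, with entries `h i * h j * h k`. -/
def kron3 {q : ℕ} (h : EuclideanSpace ℝ (Fin q)) :
    EuclideanSpace ℝ (Fin q × Fin q × Fin q) :=
  WithLp.toLp 2 (fun i => h i.1 * h i.2.1 * h i.2.2)

/-- The fourfold Kronecker power `h^{⊗4} ∈ ℝ^{q⁴}`, with entries `h i * h j * h k * h l`. -/
def kron4 {q : ℕ} (h : EuclideanSpace ℝ (Fin q)) :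
    EuclideanSpace ℝ (Fin q × Fin q × Fin q × Fin q) :=
  WithLp.toLp 2 (fun i => h i.1 * h i.2.1 * h i.2.2.1 * h i.2.2.2)

/-- `ℝ^p = ℝ^{q³} × ℝ^{q⁴}` with its standard Euclidean inner product, `p = q³ + q⁴`. -/
abbrev Rp (q : ℕ) :=
  EuclideanSpace ℝ ((Fin q × Fin q × Fin q) ⊕ (Fin q × Fin q × Fin q × Fin q))

/-- `x(h,θ) = (cos θ · h^{⊗3}, sin θ · h^{⊗4}) ∈ ℝ^p`. -/
def xMap {q : ℕ} (h : EuclideanSpace ℝ (Fin q)) (θ : ℝ) : Rp q :=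
  WithLp.toLp 2 (Sum.elim (fun i => Real.cos θ * kron3 h i) (fun i => Real.sin θ * kron4 h i))

/-- The tangent vector
`D(u) = (cos θ (u⊗h⊗h + h⊗u⊗h + h⊗h⊗u),
         sin θ (u⊗h⊗h⊗h + h⊗u⊗h⊗h + h⊗h⊗u⊗h + h⊗h⊗h⊗u)) ∈ ℝ^p`. -/
def Dvec {q : ℕ} (h u : EuclideanSpace ℝ (Fin q)) (θ : ℝ) : Rp q :=
  WithLp.toLp 2 (Sum.elim
    (fun i => Real.cos θ *
      (u i.1 * h i.2.1 * h i.2.2 + h i.1 * u i.2.1 * h i.2.2 + h i.1 * h i.2.1 * u i.2.2))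
    (fun i => Real.sin θ *
      (u i.1 * h i.2.1 * h i.2.2.1 * h i.2.2.2 + h i.1 * u i.2.1 * h i.2.2.1 * h i.2.2.2 +
        h i.1 * h i.2.1 * u i.2.2.1 * h i.2.2.2 + h i.1 * h i.2.1 * h i.2.2.1 * u i.2.2.2)))

/-- `x_θ = ∂x/∂θ = (−sin θ · h^{⊗3}, cos θ · h^{⊗4}) ∈ ℝ^p`. -/
def xTheta {q : ℕ} (h : EuclideanSpace ℝ (Fin q)) (θ : ℝ) : Rp q :=
  WithLp.toLp 2 (Sum.elim (fun i => -Real.sin θ * kron3 h i) (fun i => Real.cos θ * kron4 h i))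

private lemma sum3K {q : ℕ} (f g e : Fin q → ℝ) :
    ∑ i : Fin q × Fin q × Fin q, f i.1 * g i.2.1 * e i.2.2 =
      (∑ i, f i) * (∑ i, g i) * (∑ i, e i) := by
  rw [Fintype.sum_prod_type]
  simp only [Fintype.sum_prod_type]
  simp_rw [← Finset.mul_sum, ← Finset.sum_mul, ← Finset.mul_sum, ← Finset.sum_mul]

private lemma sum4K {q : ℕ} (f g e d : Fin q → ℝ) :
    ∑ i : Fin q × Fin q × Fin q × Fin q, f i.1 * g i.2.1 * e i.2.2.1 * d i.2.2.2 =
      (∑ i, f i) * (∑ i, g i) * (∑ i, e i) * (∑ i, d i) := by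
  rw [Fintype.sum_prod_type]
  simp only [Fintype.sum_prod_type]
  simp_rw [← Finset.mul_sum, ← Finset.sum_mul, ← Finset.mul_sum, ← Finset.sum_mul,
    ← Finset.mul_sum, ← Finset.sum_mul]

private lemma sum3m {q : ℕ} (a b c d e f : Fin q → ℝ) :
    ∑ i : Fin q × Fin q × Fin q,
      (a i.1 * b i.2.1 * c i.2.2) * (d i.1 * e i.2.1 * f i.2.2) =
      (∑ i, a i * d i) * (∑ i, b i * e i) * (∑ i, c i * f i) := by
  have h : ∀ i : Fin q × Fin q × Fin q,
      (a i.1 * b i.2.1 * c i.2.2) * (d i.1 * e i.2.1 * f i.2.2) =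
      (fun x => a x * d x) i.1 * (fun x => b x * e x) i.2.1 * (fun x => c x * f x) i.2.2 :=
    fun i => by ring
  simp_rw [h]
  exact sum3K (fun x => a x * d x) (fun x => b x * e x) (fun x => c x * f x)

private lemma sum4m {q : ℕ} (a b c d a' b' c' d' : Fin q → ℝ) :
    ∑ i : Fin q × Fin q × Fin q × Fin q,
      (a i.1 * b i.2.1 * c i.2.2.1 * d i.2.2.2) * (a' i.1 * b' i.2.1 * c' i.2.2.1 * d' i.2.2.2) =
      (∑ i, a i * a' i) * (∑ i, b i * b' i) * (∑ i, c i * c' i) * (∑ i, d i * d' i) := by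
  have h : ∀ i : Fin q × Fin q × Fin q × Fin q,
      (a i.1 * b i.2.1 * c i.2.2.1 * d i.2.2.2) * (a' i.1 * b' i.2.1 * c' i.2.2.1 * d' i.2.2.2) =
      (fun x => a x * a' x) i.1 * (fun x => b x * b' x) i.2.1 * (fun x => c x * c' x) i.2.2.1 *
        (fun x => d x * d' x) i.2.2.2 := fun i => by ring
  simp_rw [h]
  exact sum4K (fun x => a x * a' x) (fun x => b x * b' x) (fun x => c x * c' x)
    (fun x => d x * d' x)

private lemma pullConst {α : Type*} [Fintype α] (c d : ℝ) (A B : α → ℝ) :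
    ∑ i, (c * A i) * (d * B i) = (c * d) * ∑ i, A i * B i := by
  simp_rw [mul_mul_mul_comm, ← Finset.mul_sum]

/-- for a unit vector `h`, `θ ∈ ℝ`, and `u, w ⊥ h`:
`⟨D(u), D(w)⟩ = (3cos²θ + 4sin²θ)⟨u,w⟩`, `⟨D(u), x_θ⟩ = 0`, `⟨x_θ, x_θ⟩ = 1`,
`⟨x(h,θ), D(u)⟩ = 0`, and `⟨x(h,θ), x_θ⟩ = 0`. -/
theorem tangent_frame_inner_products (q : ℕ) (hq : 2 ≤ q)
    (h : EuclideanSpace ℝ (Fin q)) (hh : h ∈ Metric.sphere (0 : EuclideanSpace ℝ (Fin q)) 1)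
    (θ : ℝ) (u w : EuclideanSpace ℝ (Fin q))
    (hu : ⟪h, u⟫ = 0) (hw : ⟪h, w⟫ = 0) :
    ⟪Dvec h u θ, Dvec h w θ⟫ = (3 * Real.cos θ ^ 2 + 4 * Real.sin θ ^ 2) * ⟪u, w⟫ ∧
    ⟪Dvec h u θ, xTheta h θ⟫ = 0 ∧
    ⟪xTheta h θ, xTheta h θ⟫ = 1 ∧
    ⟪xMap h θ, Dvec h u θ⟫ = 0 ∧
    ⟪xMap h θ, xTheta h θ⟫ = 0 := by
  have hn : ‖h‖ = 1 := mem_sphere_zero_iff_norm.mp hh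
  have Shh : ∑ i, h i * h i = 1 := by
    have h1 : ⟪h, h⟫ = 1 := by
      rw [real_inner_self_eq_norm_sq, hn]; norm_num
    simp only [PiLp.inner_apply, RCLike.inner_apply, conj_trivial] at h1
    exact h1
  have Shu : ∑ i, h i * u i = 0 := by
    simpa [PiLp.inner_apply, RCLike.inner_apply, conj_trivial, mul_comm] using hu
  have Shw : ∑ i, h i * w i = 0 := by
    simpa [PiLp.inner_apply, RCLike.inner_apply, conj_trivial, mul_comm] using hw
  have Suh : ∑ i, u i * h i = 0 := by
    rw [← Shu]; exact Finset.sum_congr rfl fun i _ => mul_comm _ _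
  have Swh : ∑ i, w i * h i = 0 := by
    rw [← Shw]; exact Finset.sum_congr rfl fun i _ => mul_comm _ _
  refine ⟨?_, ?_, ?_, ?_, ?_⟩
  · simp only [Dvec, xTheta, xMap, kron3, kron4, PiLp.inner_apply, RCLike.inner_apply,
      conj_trivial, PiLp.toLp_apply, Fintype.sum_sum_type, Sum.elim_inl, Sum.elim_inr]
    rw [pullConst, pullConst]
    simp only [add_mul, mul_add, Finset.sum_add_distrib, sum3m, sum4m]
    simp only [Shh, Shu, Shw, Suh, Swh]
    ring
  · simp only [Dvec, xTheta, xMap, kron3, kron4, PiLp.inner_apply, RCLike.inner_apply,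
      conj_trivial, PiLp.toLp_apply, Fintype.sum_sum_type, Sum.elim_inl, Sum.elim_inr]
    rw [pullConst, pullConst]
    simp only [add_mul, mul_add, Finset.sum_add_distrib, sum3m, sum4m]
    simp only [Shh, Shu, Shw, Suh, Swh]
    ring
  · simp only [Dvec, xTheta, xMap, kron3, kron4, PiLp.inner_apply, RCLike.inner_apply,
      conj_trivial, PiLp.toLp_apply, Fintype.sum_sum_type, Sum.elim_inl, Sum.elim_inr]
    rw [pullConst, pullConst]
    simp only [add_mul, mul_add, Finset.sum_add_distrib, sum3m, sum4m]
    simp only [Shh, Shu, Shw, Suh, Swh]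
    linear_combination Real.sin_sq_add_cos_sq θ
  · simp only [Dvec, xTheta, xMap, kron3, kron4, PiLp.inner_apply, RCLike.inner_apply,
      conj_trivial, PiLp.toLp_apply, Fintype.sum_sum_type, Sum.elim_inl, Sum.elim_inr]
    rw [pullConst, pullConst]
    simp only [add_mul, mul_add, Finset.sum_add_distrib, sum3m, sum4m]
    simp only [Shh, Shu, Shw, Suh, Swh]
    ring
  · simp only [Dvec, xTheta, xMap, kron3, kron4, PiLp.inner_apply, RCLike.inner_apply,
      conj_trivial, PiLp.toLp_apply, Fintype.sum_sum_type, Sum.elim_inl, Sum.elim_inr]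
    rw [pullConst, pullConst]
    simp only [add_mul, mul_add, Finset.sum_add_distrib, sum3m, sum4m]
    simp only [Shh, Shu, Shw, Suh, Swh]
    ring

end
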